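/- The language L = { x # x | x ∈ {a,b}⁺ } cannot be accepted by any one-way nondeterministic reversal-bounded multicounter machine (NCM). More abstractly: suppose a machine with s states and k counters accepts each word w of L within c·|w| steps for a constant c (so the counters are bounded by c·|w|); then for large n, the number of distinct reachable configurations (state, counter values) upon reading the # in inputs x#y with |x| = n is at most s(cn)ᵏ < 2ⁿ, so by pigeonhole two distinct x, y of length n share a configuration and x#y would be accepted — a contradiction. -/

import Mathlib

open Filter Asymptotics

/-- For any `A k`, eventually `A * n ^ k < 2 ^ n`. -/
lemma aux_poly_lt_exp (A k : ℕ) : ∃ N : ℕ, ∀ n ≥ N, A * n ^ k < 2 ^ n := by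
  have h : (fun n ↦ (n : ℝ) ^ k : ℕ → ℝ) =o[atTop] fun n ↦ (2 : ℝ) ^ n :=
    isLittleO_pow_const_const_pow_of_one_lt k one_lt_two
  have hε : (0:ℝ) < 1 / (A + 1) := by positivity
  have h2 := (h.def hε).and (eventually_ge_atTop 0)
  rw [eventually_atTop] at h2
  obtain ⟨N, hN⟩ := h2
  refine ⟨N, fun n hn ↦ ?_⟩
  have := (hN n hn).1
  simp only [Real.norm_eq_abs, abs_pow, Nat.abs_cast, abs_of_pos (by positivity : (0:ℝ) < 2 ^ n)] at this
  have hlt : (A : ℝ) * (n : ℝ) ^ k < 2 ^ n := by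
    calc (A : ℝ) * (n : ℝ) ^ k ≤ (A : ℝ) * (1 / (A + 1) * 2 ^ n) := by
          exact mul_le_mul_of_nonneg_left this (by positivity)
      _ = (A / (A + 1)) * 2 ^ n := by ring
      _ < 1 * 2 ^ n := by
          apply mul_lt_mul_of_pos_right _ (by positivity)
          rw [div_lt_one (by positivity)]; linarith
      _ = 2 ^ n := one_mul _
  have : ((A * n ^ k : ℕ) : ℝ) < ((2 ^ n : ℕ) : ℝ) := by push_cast; exact hlt
  exact_mod_cast this

/-- The language L = { x # x | x ∈ {a,b}⁺ } cannot be accepted by any NCM.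
Abstract formulation: suppose a machine with s states and k counters processes inputs
x # y (x, y ∈ {a,b}*); after reading x#, it can be in any configuration (state, counter
values) from the set `conf x`, where all counter values are bounded by c·(2|x|+1)
(as the machine accepts each word w within c·|w| steps); acceptance of x#y means some
configuration reachable after x# leads to acceptance on the remaining input y.
If the accepted language is exactly { x#x | x ≠ [] }, we get a contradiction: for large n
the number s·(c(2n+1)+1)ᵏ of available configurations is less than the number 2ⁿ of words
x of length n, so two distinct x,y share a configuration and x#y would be accepted. -/
theorem stmt8 (s k c : ℕ)
    (conf : List (Fin 2) → Set (Fin s × (Fin k → ℕ)))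
    (hbound : ∀ x : List (Fin 2), ∀ cf ∈ conf x, ∀ i : Fin k,
      cf.2 i ≤ c * (2 * x.length + 1))
    (acc : (Fin s × (Fin k → ℕ)) → List (Fin 2) → Prop)
    (haccept : ∀ x y : List (Fin 2),
      (∃ cf ∈ conf x, acc cf y) ↔ (x ≠ [] ∧ x = y)) :
    False := by
  classical
  obtain ⟨N, hN⟩ := aux_poly_lt_exp (s * (4 * (c + 1)) ^ k) k
  set n := max N 1 with hn
  have hn1 : 1 ≤ n := le_max_right _ _
  have hlt : s * (4 * (c + 1)) ^ k * n ^ k < 2 ^ n := hN n (le_max_left _ _)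
  set B := c * (2 * n + 1) with hB
  -- for each binary vector of length n pick a configuration
  have hx : ∀ v : Fin n → Fin 2, ∃ cf ∈ conf (List.ofFn v), acc cf (List.ofFn v) := by
    intro v
    refine (haccept _ _).2 ⟨?_, rfl⟩
    intro h
    have : (List.ofFn v).length = n := List.length_ofFn
    rw [h] at this
    simp at this
    omega
  choose cf hcf hacc using hx
  -- injection into finite configuration space
  have hbnd : ∀ v i, (cf v).2 i ≤ B := by
    intro v i
    have := hbound (List.ofFn v) (cf v) (hcf v) i
    simpa [List.length_ofFn] using this
  let f : (Fin n → Fin 2) → Fin s × (Fin k → Fin (B + 1)) :=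
    fun v ↦ ⟨(cf v).1, fun i ↦ ⟨(cf v).2 i, Nat.lt_succ_of_le (hbnd v i)⟩⟩
  have hinj : Function.Injective f := by
    intro v w hvw
    have h1 : (cf v).1 = (cf w).1 := congrArg (fun p : Fin s × (Fin k → Fin (B+1)) => p.1) hvw
    have h2 : (cf v).2 = (cf w).2 := by
      funext i
      have := congrArg (fun p ↦ (p.2 i : ℕ)) hvw
      simpa using this
    have hcfeq : cf v = cf w := Prod.ext h1 h2
    have : ∃ g ∈ conf (List.ofFn w), acc g (List.ofFn v) := by
      exact ⟨cf w, hcf w, hcfeq ▸ hacc v⟩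
    have := ((haccept _ _).1 this).2
    exact List.ofFn_injective this.symm
  have hcard := Fintype.card_le_of_injective f hinj
  simp only [Fintype.card_fun, Fintype.card_fin, Fintype.card_prod] at hcard
  -- hcard : 2 ^ n ≤ s * (B + 1) ^ k
  have hBle : B + 1 ≤ 4 * (c + 1) * n := by
    have h1 : c * (2 * n + 1) + 1 ≤ 2 * (c+1) * n + 2 * ((c + 1) * n) := by nlinarith [hn1]
    calc B + 1 = c * (2 * n + 1) + 1 := by rw [hB]
      _ ≤ 2 * (c+1) * n + 2 * ((c + 1) * n) := h1
      _ = 4 * (c + 1) * n := by ring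
  have : s * (B + 1) ^ k ≤ s * (4 * (c + 1)) ^ k * n ^ k := by
    rw [mul_assoc, ← mul_pow]
    exact Nat.mul_le_mul_left s (Nat.pow_le_pow_left hBle k)
  omega
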